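/- Let m : X × X → X be a continuous map such that Δ(f)(s,t) = f(m(s,t)) for all f ∈ A and s, t ∈ X. Assume that for all f, g ∈ A the functions Δ(f)·(1 ⊗ g) : (s,t) ↦ Δ(f)(s,t)·g(t) and Δ(f)·(g ⊗ 1) : (s,t) ↦ Δ(f)(s,t)·g(s) vanish at infinity on X × X, and that the linear spans of {Δ(f)·(1 ⊗ g) : f, g ∈ A} and of {Δ(f)·(g ⊗ 1) : f, g ∈ A} are each dense in C₀(X × X, ℂ). Then m satisfies the cancellation laws: m(s,t) = m(r,t) implies s = r, and m(t,s) = m(t,r) implies s = r. -/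

import Mathlib

open scoped ZeroAtInfty BoundedContinuousFunction

private lemma c0_sep {Y : Type*} [TopologicalSpace Y] [LocallyCompactSpace Y] [T2Space Y]
    {p q : Y} (h : ∀ u : C₀(Y, ℂ), u p = u q) : p = q := by
  by_contra hpq
  obtain ⟨f, hfp, hfq, hcs, -⟩ := exists_continuous_one_zero_of_isCompact
    (isCompact_singleton : IsCompact {p}) (isClosed_singleton : IsClosed {q})
    (by simpa [Set.disjoint_singleton] using hpq)
  have hz : Filter.Tendsto (fun y => ((f y : ℝ) : ℂ)) (Filter.cocompact Y) (nhds 0) := by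
    have := hcs.is_zero_at_infty
    exact (Complex.continuous_ofReal.tendsto' 0 0 (by simp)).comp this
  let u : C₀(Y, ℂ) := ⟨⟨fun y => (f y : ℂ), Complex.continuous_ofReal.comp f.continuous⟩, hz⟩
  have := h u
  simp only [u, ZeroAtInftyContinuousMap.coe_mk, ContinuousMap.coe_mk] at this
  rw [hfp rfl, hfq rfl] at this
  norm_num at this

private lemma c0_eval_continuous {Y : Type*} [TopologicalSpace Y] (p : Y) :
    Continuous (fun u : C₀(Y, ℂ) => u p) := by
  have h1 : Continuous (fun v : Y →ᵇ ℂ => v p) := by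
    exact continuous_eval_const p
  exact h1.comp ZeroAtInftyContinuousMap.isometry_toBCF.continuous

private lemma span_eval_eq {Y : Type*} [TopologicalSpace Y] {S : Set C₀(Y, ℂ)} {p q : Y}
    (hd : Dense ((Submodule.span ℂ S : Submodule ℂ C₀(Y, ℂ)) : Set C₀(Y, ℂ)))
    (hS : ∀ u ∈ S, u p = u q) (u : C₀(Y, ℂ)) : u p = u q := by
  have hclosed : IsClosed {u : C₀(Y, ℂ) | u p = u q} :=
    isClosed_eq (c0_eval_continuous p) (c0_eval_continuous q)
  let E : Submodule ℂ C₀(Y, ℂ) :=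
    { carrier := {u | u p = u q}
      add_mem' := by
        intro a b ha hb
        simp only [Set.mem_setOf_eq, ZeroAtInftyContinuousMap.add_apply] at *
        rw [ha, hb]
      zero_mem' := by simp [Set.mem_setOf_eq]
      smul_mem' := by
        intro c a ha
        simp only [Set.mem_setOf_eq, ZeroAtInftyContinuousMap.smul_apply] at *
        rw [ha] }
  have hspan : (Submodule.span ℂ S : Set C₀(Y, ℂ)) ⊆ {u | u p = u q} := by
    have : Submodule.span ℂ S ≤ E := Submodule.span_le.mpr hS
    exact this
  have hu : u ∈ closure ((Submodule.span ℂ S : Submodule ℂ C₀(Y, ℂ)) : Set C₀(Y, ℂ)) :=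
    hd u
  have := (closure_mono hspan) hu
  rwa [hclosed.closure_eq] at this

theorem stmt5 {X : Type*} [TopologicalSpace X] [LocallyCompactSpace X] [T2Space X]
    (Δ : C₀(X, ℂ) →⋆ₙₐ[ℂ] ((X × X) →ᵇ ℂ))
    (m : X × X → X) (hm : Continuous m)
    (hΔ : ∀ (f : C₀(X, ℂ)) (s t : X), Δ f (s, t) = f (m (s, t)))
    (hvan₁ : ∀ f g : C₀(X, ℂ),
      Filter.Tendsto (fun p : X × X => Δ f p * g p.2)
        (Filter.cocompact (X × X)) (nhds 0))
    (hvan₂ : ∀ f g : C₀(X, ℂ),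
      Filter.Tendsto (fun p : X × X => Δ f p * g p.1)
        (Filter.cocompact (X × X)) (nhds 0))
    (hdense₁ : Dense
      ((Submodule.span ℂ {u : C₀(X × X, ℂ) | ∃ f g : C₀(X, ℂ),
          ∀ p : X × X, u p = Δ f p * g p.2} : Submodule ℂ C₀(X × X, ℂ)) :
        Set C₀(X × X, ℂ)))
    (hdense₂ : Dense
      ((Submodule.span ℂ {u : C₀(X × X, ℂ) | ∃ f g : C₀(X, ℂ),
          ∀ p : X × X, u p = Δ f p * g p.1} : Submodule ℂ C₀(X × X, ℂ)) :
        Set C₀(X × X, ℂ))) :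
    (∀ r s t : X, m (s, t) = m (r, t) → s = r) ∧
    (∀ r s t : X, m (t, s) = m (t, r) → s = r) := by
  constructor
  · intro r s t h
    have key : ∀ u : C₀(X × X, ℂ), u (s, t) = u (r, t) := by
      refine span_eval_eq hdense₁ (fun u hu => ?_)
      obtain ⟨f, g, hfg⟩ := hu
      rw [hfg, hfg, hΔ, hΔ, h]
    have := c0_sep key
    exact (Prod.mk.injEq .. ▸ this).1
  · intro r s t h
    have key : ∀ u : C₀(X × X, ℂ), u (t, s) = u (t, r) := by
      refine span_eval_eq hdense₂ (fun u hu => ?_)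
      obtain ⟨f, g, hfg⟩ := hu
      rw [hfg, hfg, hΔ, hΔ, h]
    have := c0_sep key
    exact (Prod.mk.injEq .. ▸ this).2
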